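/- If G is an ancestral graph satisfying the boundary containment property, and π = (v, v_1, …, v_k, w) is a minimal-length m-connecting path between v and w given C that, among all minimal-length m-connecting paths, has the maximum number of non-endpoint vertices in C, then every non-endpoint vertex v_1, …, v_k on π is a collider that lies in C. -/

import Mathlib

/-- Possible edge types between an ordered pair of distinct vertices of a
simple mixed graph.  `arrowTo` at `(v, w)` means `v → w`, `arrowFrom` means
`v ← w`, `undir` means `v − w` and `bidir` means `v ↔ w`. -/
inductive EType : Type
  | none | undir | arrowTo | arrowFrom | bidir
deriving DecidableEq

/-- The edge type seen from the reversed ordered pair of vertices. -/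
def EType.mirror : EType → EType
  | .none => .none
  | .undir => .undir
  | .arrowTo => .arrowFrom
  | .arrowFrom => .arrowTo
  | .bidir => .bidir

/-- A simple mixed graph: at most one edge (undirected, directed or
bi-directed) between any two distinct vertices, and no self loops. -/
structure MixedGraph (V : Type) where
  E : V → V → EType
  no_loop : ∀ v, E v v = .none
  symm : ∀ v w, E w v = (E v w).mirror

/-- `(a, b, c)` are three consecutive vertices on the path `p`. -/
def ConsecTriple {V : Type} (p : List V) (a b c : V) : Prop :=
  ∃ l1 l2, p = l1 ++ a :: b :: c :: l2

namespace MixedGraph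

variable {V : Type} (G : MixedGraph V)

/-- `v − w` is an edge of `G`. -/
def Undir (v w : V) : Prop := G.E v w = .undir

/-- `v → w` is an edge of `G`. -/
def Dir (v w : V) : Prop := G.E v w = .arrowTo

/-- `v ↔ w` is an edge of `G`. -/
def Bidir (v w : V) : Prop := G.E v w = .bidir

/-- `v` and `w` are adjacent (joined by some edge). -/
def Adj (v w : V) : Prop := G.E v w ≠ .none

/-- The edge between `a` and `b` has an arrowhead at `b`. -/
def HeadAt (a b : V) : Prop := G.E a b = .arrowTo ∨ G.E a b = .bidir

/-- Closed boundary: `v` together with its adjacent vertices. -/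
def Bd (v : V) : Set V := insert v {w | G.Adj v w}

/-- A set of vertices is complete if all of its pairs of distinct
vertices are adjacent. -/
def Complete (S : Set V) : Prop := ∀ v ∈ S, ∀ w ∈ S, v ≠ w → G.Adj v w

/-- A vertex is simplicial if its closed boundary is complete. -/
def Simplicial (v : V) : Prop := G.Complete (G.Bd v)

/-- `v` is an ancestor of `w`: `v = w` or there is a directed path from
`v` to `w`. -/
def Anc (v w : V) : Prop := Relation.ReflTransGen G.Dir v w

/-- The set of ancestors of vertices in `C`. -/
def anSet (C : Set V) : Set V := {v | ∃ c ∈ C, G.Anc v c}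

/-- `G` is an ancestral graph. -/
def Ancestral : Prop :=
  (∀ v w, G.Dir v w → ¬ G.Anc w v) ∧
  (∀ v w, G.Undir v w → ∀ u, ¬ G.HeadAt u v) ∧
  (∀ v w, G.Bidir v w → ¬ G.Anc v w)

/-- The boundary containment property. -/
def BdContain : Prop :=
  (∀ v w, G.Undir v w → G.Bd v = G.Bd w) ∧
  (∀ v w, G.Dir v w → G.Bd v ⊆ G.Bd w)

/-- `b` is a collider between consecutive neighbours `a` and `c`. -/
def Collider (a b c : V) : Prop := G.HeadAt a b ∧ G.HeadAt c b

/-- A path: a list of distinct vertices, consecutive ones adjacent. -/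
def IsPath (p : List V) : Prop := p.Nodup ∧ p.Chain' G.Adj

/-- `p` is an m-connecting path given `C`: every non-collider on it is
outside `C` and every collider on it is an ancestor of `C`. -/
def IsMConnPath (C : Set V) (p : List V) : Prop :=
  G.IsPath p ∧
  ∀ a b c, ConsecTriple p a b c →
    (G.Collider a b c → b ∈ G.anSet C) ∧ (¬ G.Collider a b c → b ∉ C)

/-- `v` and `w` are m-connected given `C`. -/
def MConn (v w : V) (C : Set V) : Prop :=
  ∃ p, G.IsMConnPath C p ∧ p.head? = some v ∧ p.getLast? = some w

/-- `v` and `w` are m-separated given `C`. -/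
def MSep (v w : V) (C : Set V) : Prop := ¬ G.MConn v w C

/-- A maximal (ancestral) graph: every pair of distinct non-adjacent
vertices is m-separated given some set. -/
def Maximal : Prop :=
  ∀ v w, v ≠ w → ¬ G.Adj v w → ∃ C : Set V, v ∉ C ∧ w ∉ C ∧ G.MSep v w C

/-- `G` is a bi-directed graph. -/
def Bidirected : Prop := ∀ v w, G.E v w = .none ∨ G.E v w = .bidir

/-- `G` is an undirected graph. -/
def UndirectedG : Prop := ∀ v w, G.E v w = .none ∨ G.E v w = .undir

/-- `G` is a directed acyclic graph. -/
def IsDAG : Prop :=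
  (∀ v w, G.E v w = .none ∨ G.E v w = .arrowTo ∨ G.E v w = .arrowFrom) ∧
  (∀ v w, G.Dir v w → ¬ G.Anc w v)

/-- `G` and `H` have the same skeleton. -/
def SameSkeleton (H : MixedGraph V) : Prop := ∀ v w, G.Adj v w ↔ H.Adj v w

/-- `G` and `H` are Markov equivalent: their m-separation relations
coincide. -/
def MarkovEquiv (H : MixedGraph V) : Prop :=
  ∀ v w (C : Set V), v ≠ w → v ∉ C → w ∉ C → (G.MSep v w C ↔ H.MSep v w C)

open Classical in
/-- The edge map obtained from `G` by dropping all arrowheads at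
simplicial vertices. -/
noncomputable def dropE (v w : V) : EType :=
  match G.E v w with
  | .none => .none
  | .undir => .undir
  | .arrowTo => if G.Simplicial w then .undir else .arrowTo
  | .arrowFrom => if G.Simplicial v then .undir else .arrowFrom
  | .bidir =>
      if G.Simplicial v then (if G.Simplicial w then .undir else .arrowTo)
      else (if G.Simplicial w then .arrowFrom else .bidir)

/-- The graph obtained from `G` by dropping all arrowheads at simplicial
vertices; for a bi-directed graph `G` this is the simplicial graph `Gˢ`. -/
noncomputable def drop : MixedGraph V where
  E := G.dropE
  no_loop v := by simp [dropE, G.no_loop]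
  symm v w := by
    unfold dropE
    rw [G.symm v w]
    cases h : G.E v w <;>
      simp only [EType.mirror] <;> split_ifs <;> simp_all [EType.mirror]

open Classical in
/-- The edge map of the minimally oriented graph `G^min_<`: starting from
the simplicial graph, each bi-directed edge `v ↔ w` with `Bd v ⊆ Bd w`
and `v < w` is replaced by `v → w`. -/
noncomputable def gminE [LinearOrder V] (v w : V) : EType :=
  match G.dropE v w with
  | .bidir =>
      if G.Bd v ⊆ G.Bd w ∧ v < w then .arrowTo
      else if G.Bd w ⊆ G.Bd v ∧ w < v then .arrowFrom
      else .bidir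
  | e => e

/-- The graph `G^min_<` produced by Algorithm 4.2 from `G` and the total
order on `V`. -/
noncomputable def gmin [LinearOrder V] : MixedGraph V where
  E := G.gminE
  no_loop v := by
    have h := G.drop.no_loop v
    simp only [drop] at h
    simp [gminE, h]
  symm v w := by
    have h := G.drop.symm v w
    simp only [drop] at h
    unfold gminE
    rw [h]
    cases hE : G.dropE v w <;> simp only [EType.mirror]
    case bidir =>
      by_cases c1 : G.Bd v ⊆ G.Bd w ∧ v < w
      · have c2 : ¬ (G.Bd w ⊆ G.Bd v ∧ w < v) := fun h' => lt_asymm c1.2 h'.2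
        simp [c1, c2, EType.mirror]
      · by_cases c2 : G.Bd w ⊆ G.Bd v ∧ w < v
        · simp [c1, c2, EType.mirror]
        · simp [c1, c2, EType.mirror]

/-- Total number of arrowheads of `G`: the number of directed edges plus
twice the number of bi-directed edges. -/
noncomputable def arr : ℕ :=
  {p : V × V | G.Dir p.1 p.2}.ncard + {p : V × V | G.Bidir p.1 p.2}.ncard

end MixedGraph

/-- `Gm` is a minimally oriented graph for `G`. -/
def MinOriented {V : Type} (G Gm : MixedGraph V) : Prop :=
  Gm.Ancestral ∧ Gm.Maximal ∧ G.MarkovEquiv Gm ∧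
  ∀ H : MixedGraph V, H.Ancestral → H.Maximal → G.MarkovEquiv H → Gm.arr ≤ H.arr


section Stmt5Aux

open Classical

variable {V : Type} {G : MixedGraph V}

lemma eMirror (G : MixedGraph V) {v w : V} {e : EType} (h : G.E v w = e) :
    G.E w v = e.mirror := by rw [G.symm, h]

lemma adj_symm' {v w : V} (h : G.Adj v w) : G.Adj w v := by
  unfold MixedGraph.Adj at h ⊢
  rw [G.symm]
  cases h' : G.E v w <;> simp [h', EType.mirror] at h ⊢

lemma mem_bd_of_adj {v u : V} (h : G.Adj v u) : u ∈ G.Bd v := by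
  exact Set.mem_insert_of_mem _ h

lemma bd_cases {v u : V} (h : u ∈ G.Bd v) : u = v ∨ G.Adj v u := by
  rcases h with h | h
  · exact Or.inl h
  · exact Or.inr h

lemma headAt_notAnc (hA : G.Ancestral) {x y : V} (h : G.HeadAt x y) : ¬ G.Anc y x := by
  rcases h with h | h
  · exact hA.1 x y h
  · exact hA.2.2 y x (eMirror G h)

lemma anc_antisymm (hA : G.Ancestral) {x y : V} (h1 : G.Anc x y) (h2 : G.Anc y x) :
    x = y := by
  rcases Relation.ReflTransGen.cases_head h1 with h | ⟨m, hxm, hmy⟩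
  · exact h
  · exact absurd (hmy.trans h2) (hA.1 x m hxm)

lemma bd_subset_of_anc (hB : G.BdContain) {x y : V} (h : G.Anc x y) :
    G.Bd x ⊆ G.Bd y := by
  induction h with
  | refl => exact subset_rfl
  | tail _ hstep ih => exact ih.trans (hB.2 _ _ hstep)

/-- If `x` is in the closed boundary of `z`, distinct from `z`, `z` carries some
arrowhead, and `z` is not an ancestor of `x`, then the edge between them has a
head at `z`. -/
lemma headAt_of_bd (hA : G.Ancestral) {x z u : V} (hx : x ∈ G.Bd z) (hne : x ≠ z)
    (hhead : G.HeadAt u z) (hnanc : ¬ G.Anc z x) : G.HeadAt x z := by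
  rcases bd_cases hx with h | h
  · exact absurd h hne
  · have hAdj : G.E x z ≠ EType.none := by
      intro hc
      exact (adj_symm' h) hc
    rcases h' : G.E x z with _ | _ | _ | _ | _
    · exact absurd h' hAdj
    · exact absurd hhead (hA.2.1 z x (eMirror G h') u)
    · exact Or.inl h'
    · have hd : G.Dir z x := eMirror G h'
      exact absurd (Relation.ReflTransGen.single hd) hnanc
    · exact Or.inr h'


lemma consecTriple_iff {p : List V} {a b c : V} :
    ConsecTriple p a b c ↔
      ∃ i, ∃ h : i + 2 < p.length, p[i] = a ∧ p[i+1] = b ∧ p[i+2] = c := by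
  constructor
  · rintro ⟨l1, l2, rfl⟩
    refine ⟨l1.length, by simp, ?_, ?_, ?_⟩
    · rw [List.getElem_append_right le_rfl]
      simp
    · rw [List.getElem_append_right (by omega)]
      simp [Nat.add_sub_cancel_left]
    · rw [List.getElem_append_right (by omega)]
      simp [Nat.add_sub_cancel_left]
  · rintro ⟨i, h, ha, hb, hc⟩
    refine ⟨p.take i, p.drop (i+3), ?_⟩
    conv_lhs => rw [← List.take_append_drop i p]
    congr 1
    rw [List.drop_eq_getElem_cons (by omega : i < p.length), ha,
        List.drop_eq_getElem_cons (by omega : i + 1 < p.length), hb,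
        List.drop_eq_getElem_cons (by omega : i + 2 < p.length), hc]

/-- The m-connection condition for a middle vertex. -/
def MixedGraph.MCond (G : MixedGraph V) (C : Set V) (a b c : V) : Prop :=
  (G.Collider a b c → b ∈ G.anSet C) ∧ (¬ G.Collider a b c → b ∉ C)

lemma isMConnPath_iff {C : Set V} {p : List V} :
    G.IsMConnPath C p ↔ p.Nodup ∧ p.Chain' G.Adj ∧
      ∀ i, ∀ h : i + 2 < p.length, G.MCond C p[i] p[i+1] p[i+2] := by
  constructor
  · rintro ⟨⟨hnd, hch⟩, htr⟩
    refine ⟨hnd, hch, fun i h => htr _ _ _ (consecTriple_iff.2 ⟨i, h, rfl, rfl, rfl⟩)⟩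
  · rintro ⟨hnd, hch, htr⟩
    refine ⟨⟨hnd, hch⟩, fun a b c hct => ?_⟩
    obtain ⟨i, h, ha, hb, hc⟩ := consecTriple_iff.1 hct
    subst ha; subst hb; subst hc
    exact htr i h

lemma adj_consec {p : List V} (hch : p.Chain' G.Adj) (i : ℕ) (h : i + 1 < p.length) :
    G.Adj p[i] p[i+1] := by
  change List.IsChain G.Adj p at hch
  rw [List.isChain_iff_getElem] at hch
  simpa using hch i (by omega)

lemma mcond_transfer_left {C : Set V} {a a' b c : V} (h : G.HeadAt a b)
    (h' : G.HeadAt a' b) (hc : G.MCond C a b c) : G.MCond C a' b c := by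
  constructor
  · intro hcol
    exact hc.1 ⟨h, hcol.2⟩
  · intro hncol
    exact hc.2 fun hcol => hncol ⟨h', hcol.2⟩

lemma mcond_transfer_right {C : Set V} {a b c c' : V} (h : G.HeadAt c b)
    (h' : G.HeadAt c' b) (hc : G.MCond C a b c) : G.MCond C a b c' := by
  constructor
  · intro hcol
    exact hc.1 ⟨hcol.1, h⟩
  · intro hncol
    exact hc.2 fun hcol => hncol ⟨hcol.1, h'⟩

lemma mcond_of_not_headAt_left {C : Set V} {a b c : V} (h : ¬ G.HeadAt a b)
    (hb : b ∉ C) : G.MCond C a b c :=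
  ⟨fun hcol => absurd hcol.1 h, fun _ => hb⟩

lemma mcond_of_not_headAt_right {C : Set V} {a b c : V} (h : ¬ G.HeadAt c b)
    (hb : b ∉ C) : G.MCond C a b c :=
  ⟨fun hcol => absurd hcol.2 h, fun _ => hb⟩

lemma mcond_of_collider {C : Set V} {a b c : V} (h1 : G.HeadAt a b)
    (h2 : G.HeadAt c b) (hb : b ∈ G.anSet C) : G.MCond C a b c :=
  ⟨fun _ => hb, fun hncol => absurd ⟨h1, h2⟩ hncol⟩


lemma left_extend (hA : G.Ancestral) (hB : G.BdContain) {C : Set V} {p : List V}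
    (hch : p.Chain' G.Adj)
    (htr : ∀ i, ∀ h : i + 2 < p.length,
      G.MCond C (p[i]'(by omega)) (p[i+1]'(by omega)) (p[i+2]'(by omega)))
    (z : V) (i₀ : ℕ)
    (hfresh : ∀ k, ∀ h : k < p.length, k ≤ i₀ → p[k] ≠ z) :
    ∀ i, i ≤ i₀ → ∀ h1 : i + 1 < p.length,
      (G.E (p[i]'(by omega)) z = .arrowTo ∨ G.E (p[i]'(by omega)) z = .bidir) →
      (G.HeadAt (p[i+1]'(by omega)) (p[i]'(by omega)) ∨ G.E (p[i]'(by omega)) z = .arrowTo) →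
      ∃ i', ∃ h' : i' + 1 < p.length, i' ≤ i ∧
        (G.E (p[i']'(by omega)) z = .arrowTo ∨ G.E (p[i']'(by omega)) z = .bidir) ∧
        ∀ h0 : 0 < i', G.MCond C (p[i'-1]'(by omega)) (p[i']'(by omega)) z := by
  intro i
  induction i using Nat.strong_induction_on with
  | _ i IH =>
  intro hii0 h1 hE hL2
  rcases hE with hE | hE
  · -- the edge from `p[i]` to `z` is `p[i] → z`
    by_cases hC : 0 < i ∧ p[i]'(by omega) ∈ C
    · obtain ⟨j, rfl⟩ : ∃ j, i = j + 1 := ⟨i - 1, by omega⟩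
      have hcol : G.Collider (p[j]'(by omega)) (p[j+1]'(by omega)) (p[j+2]'(by omega)) := by
        by_contra hn
        exact (htr j (by omega)).2 hn hC.2
      have hDir : G.Dir (p[j+1]'(by omega)) z := hE
      have hBd := hB.2 _ _ hDir
      have hAdjp : G.Adj (p[j+1]'(by omega)) (p[j]'(by omega)) :=
        adj_symm' (adj_consec hch j (by omega))
      have hne : (p[j]'(by omega)) ≠ z := hfresh j (by omega) (by omega)
      have hnanc : ¬ G.Anc z (p[j]'(by omega)) := by
        rcases hcol.1 with hh | hh
        · intro hanc
          have h2 : G.Anc (p[j]'(by omega)) z :=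
            Relation.ReflTransGen.head hh (Relation.ReflTransGen.single hDir)
          exact hne (anc_antisymm hA h2 hanc)
        · intro hanc
          have h2 : G.Anc (p[j+1]'(by omega)) (p[j]'(by omega)) :=
            Relation.ReflTransGen.head hDir hanc
          exact hA.2.2 _ _ (eMirror G hh) h2
      have hHd : G.HeadAt (p[j]'(by omega)) z :=
        headAt_of_bd hA (hBd (mem_bd_of_adj hAdjp)) hne (Or.inl hE) hnanc
      have hL2' : G.HeadAt (p[j+1]'(by omega)) (p[j]'(by omega)) ∨
          G.E (p[j]'(by omega)) z = .arrowTo := by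
        rcases hcol.1 with hh | hh
        · right
          rcases hHd with h' | h'
          · exact h'
          · exfalso
            have h2 : G.Anc (p[j]'(by omega)) z :=
              Relation.ReflTransGen.head hh (Relation.ReflTransGen.single hDir)
            exact hA.2.2 _ _ h' h2
        · exact Or.inl (Or.inr (eMirror G hh))
      obtain ⟨i', h', hle, hEz, hcond⟩ := IH j (by omega) (by omega) (by omega) hHd hL2'
      exact ⟨i', h', by omega, hEz, hcond⟩
    · refine ⟨i, h1, le_rfl, Or.inl hE, ?_⟩
      intro h0
      have hiC : p[i]'(by omega) ∉ C := fun hc => hC ⟨h0, hc⟩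
      apply mcond_of_not_headAt_right _ hiC
      intro hh
      have hzf : G.E z (p[i]'(by omega)) = .arrowFrom := eMirror G hE
      rcases hh with hh | hh <;> rw [hzf] at hh <;> exact absurd hh (by decide)
  · -- the edge between `p[i]` and `z` is bi-directed
    have hL : G.HeadAt (p[i+1]'(by omega)) (p[i]'(by omega)) := by
      rcases hL2 with h | h
      · exact h
      · rw [hE] at h; exact absurd h (by decide)
    refine ⟨i, h1, le_rfl, Or.inr hE, ?_⟩
    intro h0
    obtain ⟨j, rfl⟩ : ∃ j, i = j + 1 := ⟨i - 1, by omega⟩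
    have hz : G.HeadAt z (p[j+1]'(by omega)) := Or.inr (eMirror G hE)
    exact mcond_transfer_right hL hz (htr j (by omega))


lemma right_extend (hA : G.Ancestral) (hB : G.BdContain) {C : Set V} {p : List V}
    (hch : p.Chain' G.Adj)
    (htr : ∀ i, ∀ h : i + 2 < p.length,
      G.MCond C (p[i]'(by omega)) (p[i+1]'(by omega)) (p[i+2]'(by omega)))
    (z : V) (jr₀ : ℕ)
    (hfresh : ∀ k, ∀ h : k < p.length, jr₀ ≤ k → p[k] ≠ z) :
    ∀ d jr, p.length - jr ≤ d → jr₀ ≤ jr → 1 ≤ jr → ∀ h1 : jr < p.length,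
      (G.E (p[jr]'(by omega)) z = .arrowTo ∨ G.E (p[jr]'(by omega)) z = .bidir) →
      (G.HeadAt (p[jr-1]'(by omega)) (p[jr]'(by omega)) ∨
        G.E (p[jr]'(by omega)) z = .arrowTo) →
      ∃ jr', ∃ h' : jr' < p.length, jr ≤ jr' ∧
        (G.E (p[jr']'(by omega)) z = .arrowTo ∨ G.E (p[jr']'(by omega)) z = .bidir) ∧
        ∀ h0 : jr' + 1 < p.length, G.MCond C z (p[jr']'(by omega)) (p[jr'+1]'(by omega)) := by
  intro d
  induction d with
  | zero => intro jr hd _ _ h1; omega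
  | succ d IH =>
  intro jr hd hjr0 hjr1 h1 hE hR2
  obtain ⟨j, rfl⟩ : ∃ j, jr = j + 1 := ⟨jr - 1, by omega⟩
  rcases hE with hE | hE
  · by_cases hC : j + 2 < p.length ∧ p[j+1]'(by omega) ∈ C
    · have hcol : G.Collider (p[j]'(by omega)) (p[j+1]'(by omega)) (p[j+2]'(by omega)) := by
        by_contra hn
        exact (htr j (by omega)).2 hn hC.2
      have hDir : G.Dir (p[j+1]'(by omega)) z := hE
      have hBd := hB.2 _ _ hDir
      have hAdjn : G.Adj (p[j+1]'(by omega)) (p[j+2]'(by omega)) :=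
        adj_consec hch (j+1) (by omega)
      have hne : (p[j+2]'(by omega)) ≠ z := hfresh (j+2) (by omega) (by omega)
      have hnanc : ¬ G.Anc z (p[j+2]'(by omega)) := by
        rcases hcol.2 with hh | hh
        · intro hanc
          have h2 : G.Anc (p[j+2]'(by omega)) z :=
            Relation.ReflTransGen.head hh (Relation.ReflTransGen.single hDir)
          exact hne (anc_antisymm hA h2 hanc)
        · intro hanc
          have h2 : G.Anc (p[j+1]'(by omega)) (p[j+2]'(by omega)) :=
            Relation.ReflTransGen.head hDir hanc
          exact hA.2.2 _ _ (eMirror G hh) h2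
      have hHd : G.HeadAt (p[j+2]'(by omega)) z :=
        headAt_of_bd hA (hBd (mem_bd_of_adj hAdjn)) hne (Or.inl hE) hnanc
      have hR2' : G.HeadAt (p[j+1]'(by omega)) (p[j+2]'(by omega)) ∨
          G.E (p[j+2]'(by omega)) z = .arrowTo := by
        rcases hcol.2 with hh | hh
        · right
          rcases hHd with h' | h'
          · exact h'
          · exfalso
            have h2 : G.Anc (p[j+2]'(by omega)) z :=
              Relation.ReflTransGen.head hh (Relation.ReflTransGen.single hDir)
            exact hA.2.2 _ _ h' h2
        · exact Or.inl (Or.inr (eMirror G hh))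
      obtain ⟨jr', h', hle, hEz, hcond⟩ :=
        IH (j+2) (by omega) (by omega) (by omega) (by omega) hHd (by
          rcases hR2' with h | h
          · exact Or.inl h
          · exact Or.inr h)
      exact ⟨jr', h', by omega, hEz, hcond⟩
    · refine ⟨j+1, h1, le_rfl, Or.inl hE, ?_⟩
      intro h0
      have hiC : p[j+1]'(by omega) ∉ C := fun hc => hC ⟨by omega, hc⟩
      apply mcond_of_not_headAt_left _ hiC
      intro hh
      have hzf : G.E z (p[j+1]'(by omega)) = .arrowFrom := eMirror G hE
      rcases hh with hh | hh <;> rw [hzf] at hh <;> exact absurd hh (by decide)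
  · have hL : G.HeadAt (p[j]'(by omega)) (p[j+1]'(by omega)) := by
      rcases hR2 with h | h
      · exact h
      · rw [hE] at h; exact absurd h (by decide)
    refine ⟨j+1, h1, le_rfl, Or.inr hE, ?_⟩
    intro h0
    have hz : G.HeadAt z (p[j+1]'(by omega)) := Or.inr (eMirror G hE)
    exact mcond_transfer_left hL hz (htr j (by omega))


lemma getElem_congr_idx' {l : List V} {i j : ℕ} (hij : i = j) (h : i < l.length) :
    l[i] = l[j]'(hij ▸ h) := by subst hij; rfl

lemma splice_good {C : Set V} {p : List V} (hp : G.IsMConnPath C p)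
    (hplen : 2 < p.length) (m jr : ℕ) (z : V) (hmjr : m < jr) (hjrle : jr ≤ p.length)
    (hm0 : m = 0 → p[0]'(by omega) = z)
    (hjrlast : jr = p.length → p[p.length - 1]'(by omega) = z)
    (hfresh : ∀ k, ∀ h : k < p.length, (k < m ∨ jr ≤ k) → p[k] ≠ z)
    (hadjL : ∀ h : 1 ≤ m, G.Adj (p[m-1]'(by omega)) z)
    (hadjR : ∀ h : jr < p.length, G.Adj z (p[jr]'h))
    (condL : ∀ h : 2 ≤ m, G.MCond C (p[m-2]'(by omega)) (p[m-1]'(by omega)) z)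
    (condZ : ∀ h1 : 1 ≤ m, ∀ h2 : jr < p.length,
        G.MCond C (p[m-1]'(by omega)) z (p[jr]'h2))
    (condR : ∀ h : jr + 1 < p.length,
        G.MCond C z (p[jr]'(by omega)) (p[jr+1]'(by omega))) :
    G.IsMConnPath C (p.take m ++ z :: p.drop jr) ∧
    (p.take m ++ z :: p.drop jr).head? = p.head? ∧
    (p.take m ++ z :: p.drop jr).getLast? = p.getLast? ∧
    (p.take m ++ z :: p.drop jr).length = m + 1 + (p.length - jr) := by
  obtain ⟨hnd, hch, htr⟩ := isMConnPath_iff.1 hp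
  have hLm : (p.take m).length = m := by rw [List.length_take]; omega
  have hlen : (p.take m ++ z :: p.drop jr).length = m + 1 + (p.length - jr) := by
    simp only [List.length_append, List.length_cons, List.length_drop, hLm]
    omega
  have hget1 : ∀ k, k < m → ∀ hq : k < (p.take m ++ z :: p.drop jr).length,
      (p.take m ++ z :: p.drop jr)[k] = p[k]'(by omega) := by
    intro k hk hq
    rw [List.getElem_append_left (by rw [hLm]; exact hk)]
    exact List.getElem_take
  have hget2 : ∀ hq : m < (p.take m ++ z :: p.drop jr).length,
      (p.take m ++ z :: p.drop jr)[m] = z := by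
    intro hq
    rw [List.getElem_append_right (le_of_eq hLm)]
    simp [hLm]
  have hget3 : ∀ s, s < p.length - jr → ∀ hq : m + 1 + s < (p.take m ++ z :: p.drop jr).length,
      (p.take m ++ z :: p.drop jr)[m+1+s] = p[jr + s]'(by omega) := by
    intro s hs hq
    rw [List.getElem_append_right (by omega)]
    rw [List.getElem_cons]
    rw [dif_neg (by omega)]
    rw [List.getElem_drop]
    exact getElem_congr_idx' (by omega) _
  have hmemT : ∀ x, x ∈ p.take m → ∃ k, ∃ h : k < p.length, k < m ∧ p[k] = x := by
    intro x hx
    obtain ⟨k, hk, hkx⟩ := List.mem_iff_getElem.1 hx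
    rw [hLm] at hk
    exact ⟨k, by omega, hk, (List.getElem_take).symm.trans hkx⟩
  have hmemD : ∀ x, x ∈ p.drop jr → ∃ k, ∃ h : k < p.length, jr ≤ k ∧ p[k] = x := by
    intro x hx
    obtain ⟨k, hk, hkx⟩ := List.mem_iff_getElem.1 hx
    rw [List.length_drop] at hk
    exact ⟨jr + k, by omega, by omega, (List.getElem_drop).symm.trans hkx⟩
  have hndq : (p.take m ++ z :: p.drop jr).Nodup := by
    rw [List.nodup_append]
    refine ⟨(List.take_sublist _ _).nodup hnd, ?_, ?_⟩
    · rw [List.nodup_cons]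
      refine ⟨?_, (List.drop_sublist _ _).nodup hnd⟩
      intro hz
      obtain ⟨k, hk, hjk, hkz⟩ := hmemD z hz
      exact hfresh k hk (Or.inr hjk) hkz
    · rintro x hxT y hxC rfl
      rcases List.mem_cons.1 hxC with rfl | hxD
      · obtain ⟨k, hk, hkm, hkz⟩ := hmemT x hxT
        exact hfresh k hk (Or.inl hkm) hkz
      · obtain ⟨k, hk, hkm, hkx⟩ := hmemT x hxT
        obtain ⟨k', hk', hjk', hkx'⟩ := hmemD x hxD
        have : k = k' := (hnd.getElem_inj_iff).1 (hkx.trans hkx'.symm)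
        omega
  have hchq : (p.take m ++ z :: p.drop jr).Chain' G.Adj := by
    change List.IsChain G.Adj p at hch
    change List.IsChain G.Adj (p.take m ++ z :: p.drop jr)
    rw [List.isChain_append]
    refine ⟨hch.take m, ?_, ?_⟩
    · rw [List.isChain_cons]
      refine ⟨?_, hch.drop jr⟩
      intro y hy
      rw [List.head?_eq_getElem?] at hy
      obtain ⟨h0, h0y⟩ := List.getElem?_eq_some_iff.1 hy
      rw [List.length_drop] at h0
      have hjrlt : jr < p.length := by omega
      have hyp : y = p[jr]'hjrlt := by
        rw [← h0y, List.getElem_drop]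
        exact getElem_congr_idx' (by omega) _
      rw [hyp]
      exact hadjR hjrlt
    · intro x hx y hy
      rw [List.head?_cons, Option.mem_def, Option.some.injEq] at hy
      rcases Nat.eq_zero_or_pos m with hm | hm
      · subst hm
        simp at hx
      · have hlast : (p.take m).getLast? = some (p[m-1]'(by omega)) := by
          rw [List.getLast?_eq_getElem?, List.getElem?_eq_getElem (by rw [hLm]; omega)]
          congr 1
          rw [List.getElem_take]
          exact getElem_congr_idx' (by rw [hLm]) _
        rw [hlast, Option.mem_def, Option.some.injEq] at hx
        rw [← hx, ← hy]
        exact hadjL hm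
  have htrq : ∀ k, ∀ h : k + 2 < (p.take m ++ z :: p.drop jr).length,
      G.MCond C ((p.take m ++ z :: p.drop jr)[k]'(by omega))
        ((p.take m ++ z :: p.drop jr)[k+1]'(by omega))
        ((p.take m ++ z :: p.drop jr)[k+2]'(by omega)) := by
    intro k hk
    have hk' := hk
    rw [hlen] at hk'
    rcases lt_trichotomy (k+2) m with h2 | h2 | h2
    · rw [hget1 k (by omega) (by omega), hget1 (k+1) (by omega) (by omega),
          hget1 (k+2) (by omega) (by omega)]
      exact htr k (by omega)
    · rw [hget1 k (by omega) (by omega), hget1 (k+1) (by omega) (by omega),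
          getElem_congr_idx' (show k+2 = m from h2) (by omega), hget2 (by omega)]
      have e1 : p[k]'(by omega) = p[m-2]'(by omega) := getElem_congr_idx' (by omega) _
      have e2 : p[k+1]'(by omega) = p[m-1]'(by omega) := getElem_congr_idx' (by omega) _
      rw [e1, e2]
      exact condL (by omega)
    · rcases lt_trichotomy (k+1) m with h1 | h1 | h1
      · omega
      · -- triple (p[m-1], z, p[jr])
        have hjrlt : jr < p.length := by omega
        rw [hget1 k (by omega) (by omega),
            getElem_congr_idx' (show k+1 = m from h1) (by omega), hget2 (by omega),
            getElem_congr_idx' (show k+2 = m+1+0 by omega) (by omega),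
            hget3 0 (by omega) (by omega)]
        have e1 : p[k]'(by omega) = p[m-1]'(by omega) := getElem_congr_idx' (by omega) _
        have e2 : p[jr+0]'(by omega) = p[jr]'hjrlt := getElem_congr_idx' (by omega) _
        rw [e1, e2]
        exact condZ (by omega) hjrlt
      · rcases lt_trichotomy k m with h0 | h0 | h0
        · omega
        · -- triple (z, p[jr], p[jr+1])
          rw [getElem_congr_idx' (show k = m from h0) (by omega), hget2 (by omega),
              getElem_congr_idx' (show k+1 = m+1+0 by omega) (by omega),
              hget3 0 (by omega) (by omega),
              getElem_congr_idx' (show k+2 = m+1+1 by omega) (by omega),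
              hget3 1 (by omega) (by omega)]
          have e1 : p[jr+0]'(by omega) = p[jr]'(by omega) := getElem_congr_idx' (by omega) _
          exact e1 ▸ condR (by omega)
        · -- all in drop part
          rw [getElem_congr_idx' (show k = m+1+(k-m-1) by omega) (by omega),
              hget3 (k-m-1) (by omega) (by omega),
              getElem_congr_idx' (show k+1 = m+1+(k-m) by omega) (by omega),
              hget3 (k-m) (by omega) (by omega),
              getElem_congr_idx' (show k+2 = m+1+(k-m+1) by omega) (by omega),
              hget3 (k-m+1) (by omega) (by omega)]
          have e2 : p[jr+(k-m)]'(by omega) = p[(jr+(k-m-1))+1]'(by omega) :=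
            getElem_congr_idx' (by omega) _
          have e3 : p[jr+(k-m+1)]'(by omega) = p[(jr+(k-m-1))+2]'(by omega) :=
            getElem_congr_idx' (by omega) _
          rw [e2, e3]
          exact htr (jr+(k-m-1)) (by omega)
  refine ⟨isMConnPath_iff.2 ⟨hndq, hchq, htrq⟩, ?_, ?_, hlen⟩
  · rw [List.head?_eq_getElem?, List.head?_eq_getElem?,
        List.getElem?_eq_getElem (by rw [hlen]; omega : 0 < (p.take m ++ z :: p.drop jr).length),
        List.getElem?_eq_getElem (by omega : 0 < p.length)]
    congr 1
    rcases Nat.eq_zero_or_pos m with hm | hm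
    · rw [getElem_congr_idx' (show 0 = m by omega) (by rw [hlen]; omega), hget2 (by rw [hlen]; omega)]
      exact (hm0 hm).symm
    · exact hget1 0 hm (by rw [hlen]; omega)
  · rw [List.getLast?_eq_getElem?, List.getLast?_eq_getElem?,
        List.getElem?_eq_getElem
          (by rw [hlen]; omega :
            (p.take m ++ z :: p.drop jr).length - 1 < (p.take m ++ z :: p.drop jr).length),
        List.getElem?_eq_getElem (by omega : p.length - 1 < p.length)]
    congr 1
    rcases eq_or_lt_of_le hjrle with hjre | hjrlt
    · rw [getElem_congr_idx' (show (p.take m ++ z :: p.drop jr).length - 1 = m by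
            rw [hlen]; omega) (by rw [hlen]; omega), hget2 (by rw [hlen]; omega)]
      exact (hjrlast hjre).symm
    · rw [getElem_congr_idx' (show (p.take m ++ z :: p.drop jr).length - 1
              = m+1+(p.length - 1 - jr) by rw [hlen]; omega) (by rw [hlen]; omega),
          hget3 (p.length - 1 - jr) (by omega) (by rw [hlen]; omega)]
      exact getElem_congr_idx' (by omega) _


lemma interior_countP {p : List V} {m : ℕ} (hm : 1 ≤ m) (hmlt : m + 1 < p.length)
    (x : V) (f : V → Bool) :
    ((p.take m ++ x :: p.drop (m+1)).drop 1).dropLast.countP f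
      = ((p.take m).drop 1).countP f + (if f x then 1 else 0)
        + ((p.drop (m+1)).dropLast).countP f := by
  have hA : (p.take m).length = m := by rw [List.length_take]; omega
  have hD : p.drop (m+1) ≠ [] := by
    intro h
    have h2 : (p.drop (m+1)).length = 0 := by rw [h]; rfl
    rw [List.length_drop] at h2
    omega
  rw [List.drop_append_of_le_length (by omega : 1 ≤ (p.take m).length)]
  rw [show (x :: p.drop (m+1)) = [x] ++ p.drop (m+1) from rfl]
  rw [← List.append_assoc]
  rw [List.dropLast_append_of_ne_nil hD]
  rw [List.countP_append, List.countP_append]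
  have hx : List.countP f [x] = if f x then 1 else 0 := by
    by_cases hfx : f x <;> simp [List.countP_cons, hfx]
  rw [hx]

end Stmt5Aux

set_option maxHeartbeats 2000000 in
open Classical in
/-- In an ancestral graph with the boundary containment
property, if `p` is a minimal-length m-connecting path between `v` and
`w` given `C` that, among all minimal-length m-connecting paths, has the
maximum number of non-endpoint vertices in `C`, then every non-endpoint
vertex of `p` is a collider lying in `C`. -/
theorem stmt5 {V : Type} (G : MixedGraph V) (hA : G.Ancestral) (hB : G.BdContain)
    (v w : V) (C : Set V) (p : List V)
    (hp : G.IsMConnPath C p) (hh : p.head? = some v) (hl : p.getLast? = some w)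
    (hmin : ∀ q, G.IsMConnPath C q → q.head? = some v → q.getLast? = some w →
      p.length ≤ q.length)
    (hmax : ∀ q, G.IsMConnPath C q → q.head? = some v → q.getLast? = some w →
      q.length = p.length →
      ((q.drop 1).dropLast.countP fun x => decide (x ∈ C)) ≤
        ((p.drop 1).dropLast.countP fun x => decide (x ∈ C))) :
    ∀ a b c, ConsecTriple p a b c → G.Collider a b c ∧ b ∈ C := by
  intro a b c htrip
  obtain ⟨t0, ht0, ha, hb, hc⟩ := consecTriple_iff.1 htrip
  subst ha; subst hb; subst hc
  obtain ⟨hnd, hch, htr⟩ := isMConnPath_iff.1 hp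
  have hlenp : 2 < p.length := by omega
  have hnei : ∀ i j (hi : i < p.length) (hj : j < p.length), i ≠ j →
      p[i]'hi ≠ p[j]'hj := fun i j hi hj hij h => hij ((hnd.getElem_inj_iff).1 h)
  have key : ∀ (m jr : ℕ) (z : V) (hmjr : m < jr) (hjrle : jr ≤ p.length),
      (m = 0 → p[0]'(by omega) = z) →
      (jr = p.length → p[p.length - 1]'(by omega) = z) →
      (∀ k, ∀ h : k < p.length, (k < m ∨ jr ≤ k) → p[k] ≠ z) →
      (∀ h : 1 ≤ m, G.Adj (p[m-1]'(by omega)) z) →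
      (∀ h : jr < p.length, G.Adj z (p[jr]'h)) →
      (∀ h : 2 ≤ m, G.MCond C (p[m-2]'(by omega)) (p[m-1]'(by omega)) z) →
      (∀ h1 : 1 ≤ m, ∀ h2 : jr < p.length, G.MCond C (p[m-1]'(by omega)) z (p[jr]'h2)) →
      (∀ h : jr + 1 < p.length, G.MCond C z (p[jr]'(by omega)) (p[jr+1]'(by omega))) →
      (jr = m + 1 → 1 ≤ m ∧ m + 1 < p.length ∧ z ∈ C ∧ p[m]'(by omega) ∉ C) →
      False := by
    intro m jr z hmjr hjrle hm0 hjrlast hfr hadjL hadjR condL condZ condR hcnt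
    obtain ⟨hq, hqh, hql, hqlen⟩ := splice_good hp hlenp m jr z hmjr hjrle hm0
      hjrlast hfr hadjL hadjR condL condZ condR
    have h1 := hmin _ hq (hqh.trans hh) (hql.trans hl)
    rw [hqlen] at h1
    have hjm : jr = m + 1 := by omega
    obtain ⟨hm1, hmlt, hzC, hbC⟩ := hcnt hjm
    have h2 := hmax _ hq (hqh.trans hh) (hql.trans hl) (by rw [hqlen]; omega)
    rw [hjm] at h2
    have hcq := interior_countP hm1 hmlt z (fun x => decide (x ∈ C))
    have hcp := interior_countP hm1 hmlt (p[m]'(by omega)) (fun x => decide (x ∈ C))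
    have hpd : p.take m ++ (p[m]'(by omega)) :: p.drop (m+1) = p := by
      conv_rhs => rw [← List.take_append_drop m p]
      rw [List.drop_eq_getElem_cons (by omega : m < p.length)]
    rw [hpd] at hcp
    rw [hcq, hcp] at h2
    rw [if_pos (by simpa using hzC), if_neg (by simpa using hbC)] at h2
    omega
  -- Step A : the middle vertex is a collider
  have hcol : G.Collider (p[t0]'(by omega)) (p[t0+1]'(by omega)) (p[t0+2]'(by omega)) := by
    by_contra hncol
    have hbC : p[t0+1]'(by omega) ∉ C := (htr t0 ht0).2 hncol
    have hab : G.Adj (p[t0]'(by omega)) (p[t0+1]'(by omega)) := adj_consec hch t0 (by omega)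
    have hbc : G.Adj (p[t0+1]'(by omega)) (p[t0+2]'(by omega)) :=
      adj_consec hch (t0+1) (by omega)
    have FL : G.HeadAt (p[t0+1]'(by omega)) (p[t0+2]'(by omega)) →
        (G.E (p[t0]'(by omega)) (p[t0+2]'(by omega)) = .arrowTo ∨
         G.E (p[t0]'(by omega)) (p[t0+2]'(by omega)) = .bidir) →
        (G.HeadAt (p[t0+1]'(by omega)) (p[t0]'(by omega)) ∨
         G.E (p[t0]'(by omega)) (p[t0+2]'(by omega)) = .arrowTo) → False := by
      intro hHbc hEac hL2
      obtain ⟨i', h', hle, hEz, hcond⟩ := left_extend hA hB hch htr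
        (p[t0+2]'(by omega)) t0 (fun k hk hki => hnei k (t0+2) hk (by omega) (by omega))
        t0 le_rfl (by omega) hEac hL2
      apply key (i'+1) (t0+3) (p[t0+2]'(by omega)) (by omega) (by omega)
      · intro h; exact absurd h (by omega)
      · intro hjr; exact getElem_congr_idx' (by omega) _
      · intro k hk hcases
        exact hnei k (t0+2) hk (by omega) (by omega)
      · intro h1
        have e : p[i'+1-1]'(by omega) = p[i']'(by omega) := getElem_congr_idx' (by omega) _
        rw [e]
        intro hnone
        rcases hEz with hEz | hEz <;> rw [hnone] at hEz <;> exact absurd hEz (by decide)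
      · intro hlt
        have e : p[t0+3]'hlt = p[(t0+2)+1]'(by omega) := getElem_congr_idx' (by omega) _
        rw [e]
        exact adj_consec hch (t0+2) (by omega)
      · intro h2
        have e1 : p[i'+1-2]'(by omega) = p[i'-1]'(by omega) := getElem_congr_idx' (by omega) _
        have e2 : p[i'+1-1]'(by omega) = p[i']'(by omega) := getElem_congr_idx' (by omega) _
        rw [e1, e2]
        exact hcond (by omega)
      · intro h1 h2
        have e2 : p[i'+1-1]'(by omega) = p[i']'(by omega) := getElem_congr_idx' (by omega) _
        rw [e2]
        have base := htr (t0+1) (by omega)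
        have e3 : p[t0+1+1]'(by omega) = p[t0+2]'(by omega) := getElem_congr_idx' (by omega) _
        have e4 : p[t0+1+2]'(by omega) = p[t0+3]'h2 := getElem_congr_idx' (by omega) _
        rw [e3, e4] at base
        exact mcond_transfer_left hHbc hEz base
      · intro h1
        have base := htr (t0+2) (by omega)
        have e3 : p[t0+2+1]'(by omega) = p[t0+3]'(by omega) := getElem_congr_idx' (by omega) _
        have e4 : p[t0+2+2]'(by omega) = p[t0+3+1]'(by omega) := getElem_congr_idx' (by omega) _
        rw [e3, e4] at base
        exact base
      · intro hj; exact absurd hj (by omega)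
    have FR : G.HeadAt (p[t0+1]'(by omega)) (p[t0]'(by omega)) →
        (G.E (p[t0+2]'(by omega)) (p[t0]'(by omega)) = .arrowTo ∨
         G.E (p[t0+2]'(by omega)) (p[t0]'(by omega)) = .bidir) →
        (G.HeadAt (p[t0+1]'(by omega)) (p[t0+2]'(by omega)) ∨
         G.E (p[t0+2]'(by omega)) (p[t0]'(by omega)) = .arrowTo) → False := by
      intro hHba hEca hR2
      have hR2' : G.HeadAt (p[t0+2-1]'(by omega)) (p[t0+2]'(by omega)) ∨
          G.E (p[t0+2]'(by omega)) (p[t0]'(by omega)) = .arrowTo := by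
        have e : p[t0+2-1]'(by omega) = p[t0+1]'(by omega) := getElem_congr_idx' (by omega) _
        rw [e]; exact hR2
      obtain ⟨jr', h', hge, hEz, hcond⟩ := right_extend hA hB hch htr
        (p[t0]'(by omega)) (t0+2) (fun k hk hki => hnei k t0 hk (by omega) (by omega))
        p.length (t0+2) (by omega) le_rfl (by omega) (by omega) hEca hR2'
      apply key t0 jr' (p[t0]'(by omega)) (by omega) (by omega)
      · intro h; exact getElem_congr_idx' (by omega) _
      · intro h; exact absurd h (by omega)
      · intro k hk hcases
        exact hnei k t0 hk (by omega) (by omega)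
      · intro h1
        have e : p[t0-1+1]'(by omega) = p[t0]'(by omega) := getElem_congr_idx' (by omega) _
        have := adj_consec hch (t0-1) (by omega)
        rw [e] at this
        exact this
      · intro hlt
        apply adj_symm'
        intro hnone
        rcases hEz with hEz | hEz <;> rw [hnone] at hEz <;> exact absurd hEz (by decide)
      · intro h2
        have base := htr (t0-2) (by omega)
        have e3 : p[t0-2+1]'(by omega) = p[t0-1]'(by omega) := getElem_congr_idx' (by omega) _
        have e4 : p[t0-2+2]'(by omega) = p[t0]'(by omega) := getElem_congr_idx' (by omega) _
        rw [e3, e4] at base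
        exact base
      · intro h1 h2
        have base := htr (t0-1) (by omega)
        have e3 : p[t0-1+1]'(by omega) = p[t0]'(by omega) := getElem_congr_idx' (by omega) _
        have e4 : p[t0-1+2]'(by omega) = p[t0+1]'(by omega) := getElem_congr_idx' (by omega) _
        rw [e3, e4] at base
        exact mcond_transfer_right hHba hEz base
      · exact fun h1 => hcond h1
      · intro hj; exact absurd hj (by omega)
    by_cases hHab : G.HeadAt (p[t0]'(by omega)) (p[t0+1]'(by omega))
    · -- `b` has an arrowhead from the `a` side, so no arrowhead from the `c` side
      have hHcb : ¬ G.HeadAt (p[t0+2]'(by omega)) (p[t0+1]'(by omega)) :=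
        fun h => hncol ⟨hHab, h⟩
      have hEcb : G.E (p[t0+2]'(by omega)) (p[t0+1]'(by omega)) = .arrowFrom := by
        rcases hcb : G.E (p[t0+2]'(by omega)) (p[t0+1]'(by omega)) with _|_|_|_|_
        · exact absurd (eMirror G hcb) hbc
        · exact absurd hHab (hA.2.1 _ _ (eMirror G hcb) _)
        · exact absurd (Or.inl hcb) hHcb
        · rfl
        · exact absurd (Or.inr hcb) hHcb
      have hbcD : G.Dir (p[t0+1]'(by omega)) (p[t0+2]'(by omega)) := eMirror G hEcb
      have hBd : G.Bd (p[t0+1]'(by omega)) ⊆ G.Bd (p[t0+2]'(by omega)) := hB.2 _ _ hbcD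
      have haneC : (p[t0]'(by omega)) ≠ (p[t0+2]'(by omega)) := hnei _ _ _ _ (by omega)
      have hacAdj : G.Adj (p[t0+2]'(by omega)) (p[t0]'(by omega)) := by
        rcases bd_cases (hBd (mem_bd_of_adj (adj_symm' hab))) with h | h
        · exact absurd h haneC
        · exact h
      have hacne : G.E (p[t0]'(by omega)) (p[t0+2]'(by omega)) ≠ .none :=
        fun h => hacAdj (eMirror G h)
      have hacnundir : G.E (p[t0]'(by omega)) (p[t0+2]'(by omega)) ≠ .undir := by
        intro h
        exact hA.2.1 _ _ (eMirror G h) _ (Or.inl hbcD)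
      rcases hHab with hab' | hab'
      · have hAnc : G.Anc (p[t0]'(by omega)) (p[t0+2]'(by omega)) :=
          Relation.ReflTransGen.head hab' (Relation.ReflTransGen.single hbcD)
        have hEac : G.E (p[t0]'(by omega)) (p[t0+2]'(by omega)) = .arrowTo := by
          rcases hac : G.E (p[t0]'(by omega)) (p[t0+2]'(by omega)) with _|_|_|_|_
          · exact absurd hac hacne
          · exact absurd hac hacnundir
          · rfl
          · exact absurd hAnc (hA.1 _ _ (eMirror G hac))
          · exact absurd hAnc (hA.2.2 _ _ hac)
        exact FL (Or.inl hbcD) (Or.inl hEac) (Or.inr hEac)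
      · have hEac2 : G.E (p[t0]'(by omega)) (p[t0+2]'(by omega)) = .arrowTo ∨
            G.E (p[t0]'(by omega)) (p[t0+2]'(by omega)) = .bidir := by
          rcases hac : G.E (p[t0]'(by omega)) (p[t0+2]'(by omega)) with _|_|_|_|_
          · exact absurd hac hacne
          · exact absurd hac hacnundir
          · exact Or.inl rfl
          · exfalso
            have hca : G.Dir (p[t0+2]'(by omega)) (p[t0]'(by omega)) := eMirror G hac
            have hanc : G.Anc (p[t0+1]'(by omega)) (p[t0]'(by omega)) :=
              Relation.ReflTransGen.head hbcD (Relation.ReflTransGen.single hca)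
            exact hA.2.2 _ _ (eMirror G hab') hanc
          · exact Or.inr rfl
        exact FL (Or.inl hbcD) hEac2 (Or.inl (Or.inr (eMirror G hab')))
    · -- no arrowhead at `b` from the `a` side
      have hEabcases : G.E (p[t0]'(by omega)) (p[t0+1]'(by omega)) = .undir ∨
          G.E (p[t0]'(by omega)) (p[t0+1]'(by omega)) = .arrowFrom := by
        rcases hab' : G.E (p[t0]'(by omega)) (p[t0+1]'(by omega)) with _|_|_|_|_
        · exact absurd hab' hab
        · exact Or.inl rfl
        · exact absurd (Or.inl hab') hHab
        · exact Or.inr rfl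
        · exact absurd (Or.inr hab') hHab
      rcases hEabcases with hEab | hEab
      · -- S1 : `a − b`
        have hnoheadb : ∀ u, ¬ G.HeadAt u (p[t0+1]'(by omega)) :=
          fun u => hA.2.1 _ _ (eMirror G hEab) u
        have hnoheada : ∀ u, ¬ G.HeadAt u (p[t0]'(by omega)) :=
          fun u => hA.2.1 _ _ hEab u
        have hBdab : G.Bd (p[t0]'(by omega)) = G.Bd (p[t0+1]'(by omega)) := hB.1 _ _ hEab
        have hacAdj : G.Adj (p[t0]'(by omega)) (p[t0+2]'(by omega)) := by
          have hmem : (p[t0+2]'(by omega)) ∈ G.Bd (p[t0]'(by omega)) := by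
            rw [hBdab]; exact mem_bd_of_adj hbc
          rcases bd_cases hmem with h | h
          · exact absurd h.symm (hnei t0 (t0+2) (by omega) (by omega) (by omega))
          · exact h
        rcases hcb : G.E (p[t0+2]'(by omega)) (p[t0+1]'(by omega)) with _|_|_|_|_
        · exact absurd (eMirror G hcb) hbc
        · -- S1a : `c − b` : both junctions headless, shorter path directly
          have hnoheadc : ∀ u, ¬ G.HeadAt u (p[t0+2]'(by omega)) :=
            fun u => hA.2.1 _ _ hcb u
          apply key (t0+1) (t0+3) (p[t0+2]'(by omega)) (by omega) (by omega)
          · intro h; exact absurd h (by omega)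
          · intro hjr; exact getElem_congr_idx' (by omega) _
          · intro k hk hcases
            exact hnei k (t0+2) hk (by omega) (by omega)
          · intro h1
            have e : p[t0+1-1]'(by omega) = p[t0]'(by omega) := getElem_congr_idx' (by omega) _
            rw [e]
            exact hacAdj
          · intro hlt
            have e : p[t0+3]'hlt = p[(t0+2)+1]'(by omega) := getElem_congr_idx' (by omega) _
            rw [e]
            exact adj_consec hch (t0+2) (by omega)
          · intro h2
            have e1 : p[t0+1-2]'(by omega) = p[t0-1]'(by omega) := getElem_congr_idx' (by omega) _
            have e2 : p[t0+1-1]'(by omega) = p[t0]'(by omega) := getElem_congr_idx' (by omega) _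
            rw [e1, e2]
            apply mcond_of_not_headAt_right (hnoheada _)
            have base := htr (t0-1) (by omega)
            have e3 : p[t0-1+1]'(by omega) = p[t0]'(by omega) := getElem_congr_idx' (by omega) _
            rw [e3] at base
            exact base.2 (fun hcol => hnoheada _ hcol.1)
          · intro h1 h2
            have e2 : p[t0+1-1]'(by omega) = p[t0]'(by omega) := getElem_congr_idx' (by omega) _
            rw [e2]
            apply mcond_of_not_headAt_left (hnoheadc _)
            have base := htr (t0+1) (by omega)
            have e3 : p[t0+1+1]'(by omega) = p[t0+2]'(by omega) := getElem_congr_idx' (by omega) _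
            rw [e3] at base
            exact base.2 (fun hcol => hnoheadc _ hcol.1)
          · intro h1
            have base := htr (t0+2) (by omega)
            have e3 : p[t0+2+1]'(by omega) = p[t0+3]'(by omega) := getElem_congr_idx' (by omega) _
            have e4 : p[t0+2+2]'(by omega) = p[t0+3+1]'(by omega) := getElem_congr_idx' (by omega) _
            rw [e3, e4] at base
            exact base
          · intro hj; exact absurd hj (by omega)
        · exact absurd (Or.inl hcb) (hnoheadb _)
        · -- S1b : `b → c`
          have hbcD : G.Dir (p[t0+1]'(by omega)) (p[t0+2]'(by omega)) := eMirror G hcb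
          have hEac : G.E (p[t0]'(by omega)) (p[t0+2]'(by omega)) = .arrowTo := by
            rcases hac : G.E (p[t0]'(by omega)) (p[t0+2]'(by omega)) with _|_|_|_|_
            · exact absurd hac (fun h => hacAdj h)
            · exact absurd (Or.inl hbcD) (hA.2.1 _ _ (eMirror G hac) _)
            · rfl
            · exact absurd (Or.inl (eMirror G hac)) (hnoheada _)
            · exact absurd (Or.inr (eMirror G hac)) (hnoheada _)
          exact FL (Or.inl hbcD) (Or.inl hEac) (Or.inr hEac)
        · exact absurd (Or.inr hcb) (hnoheadb _)
      · -- S2 : `b → a`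
        have hba : G.Dir (p[t0+1]'(by omega)) (p[t0]'(by omega)) := eMirror G hEab
        have hHba : G.HeadAt (p[t0+1]'(by omega)) (p[t0]'(by omega)) := Or.inl hba
        have hBdba : G.Bd (p[t0+1]'(by omega)) ⊆ G.Bd (p[t0]'(by omega)) := hB.2 _ _ hba
        have hacAdj : G.Adj (p[t0]'(by omega)) (p[t0+2]'(by omega)) := by
          rcases bd_cases (hBdba (mem_bd_of_adj hbc)) with h | h
          · exact absurd h.symm (hnei t0 (t0+2) (by omega) (by omega) (by omega))
          · exact h
        rcases hcb : G.E (p[t0+2]'(by omega)) (p[t0+1]'(by omega)) with _|_|_|_|_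
        · exact absurd (eMirror G hcb) hbc
        · -- S2a : `c − b`
          have hnoheadc : ∀ u, ¬ G.HeadAt u (p[t0+2]'(by omega)) :=
            fun u => hA.2.1 _ _ hcb u
          have hEca : G.E (p[t0+2]'(by omega)) (p[t0]'(by omega)) = .arrowTo := by
            rcases hac : G.E (p[t0+2]'(by omega)) (p[t0]'(by omega)) with _|_|_|_|_
            · exact absurd (eMirror G hac) hacAdj
            · exact absurd hHba (hA.2.1 _ _ (eMirror G hac) _)
            · rfl
            · exact absurd (Or.inl (eMirror G hac)) (hnoheadc _)
            · exact absurd (Or.inr (eMirror G hac)) (hnoheadc _)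
          exact FR hHba (Or.inl hEca) (Or.inr hEca)
        · -- S2b : `c → b`
          have hcbD : G.Dir (p[t0+2]'(by omega)) (p[t0+1]'(by omega)) := hcb
          have hAncca : G.Anc (p[t0+2]'(by omega)) (p[t0]'(by omega)) :=
            Relation.ReflTransGen.head hcbD (Relation.ReflTransGen.single hba)
          have hEca : G.E (p[t0+2]'(by omega)) (p[t0]'(by omega)) = .arrowTo := by
            rcases hac : G.E (p[t0+2]'(by omega)) (p[t0]'(by omega)) with _|_|_|_|_
            · exact absurd (eMirror G hac) hacAdj
            · exact absurd hHba (hA.2.1 _ _ (eMirror G hac) _)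
            · rfl
            · exact absurd hAncca (hA.1 _ _ (eMirror G hac))
            · exact absurd hAncca (hA.2.2 _ _ hac)
          exact FR hHba (Or.inl hEca) (Or.inr hEca)
        · -- S2c : `b → c`
          have hbcD : G.Dir (p[t0+1]'(by omega)) (p[t0+2]'(by omega)) := eMirror G hcb
          rcases hac : G.E (p[t0]'(by omega)) (p[t0+2]'(by omega)) with _|_|_|_|_
          · exact absurd hac (fun h => hacAdj h)
          · exact absurd hHba (hA.2.1 _ _ hac _)
          · exact FL (Or.inl hbcD) (Or.inl hac) (Or.inr hac)
          · exact FR hHba (Or.inl (eMirror G hac)) (Or.inl (Or.inl hbcD))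
          · exact FL (Or.inl hbcD) (Or.inr hac) (Or.inl hHba)
        · -- S2d : `b ↔ c`
          have hHbc : G.HeadAt (p[t0+1]'(by omega)) (p[t0+2]'(by omega)) :=
            Or.inr (eMirror G hcb)
          rcases hac : G.E (p[t0]'(by omega)) (p[t0+2]'(by omega)) with _|_|_|_|_
          · exact absurd hac (fun h => hacAdj h)
          · exact absurd hHba (hA.2.1 _ _ hac _)
          · exact FL hHbc (Or.inl hac) (Or.inr hac)
          · exact FR hHba (Or.inl (eMirror G hac)) (Or.inl hHbc)
          · exact FL hHbc (Or.inr hac) (Or.inl hHba)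
  refine ⟨hcol, ?_⟩
  -- Step B : the middle vertex lies in C
  by_contra hbC
  have hbAn : p[t0+1]'(by omega) ∈ G.anSet C := (htr t0 ht0).1 hcol
  obtain ⟨c₀, hc₀C, hanc⟩ := hbAn
  have hab : G.Adj (p[t0]'(by omega)) (p[t0+1]'(by omega)) := adj_consec hch t0 (by omega)
  have hbc : G.Adj (p[t0+1]'(by omega)) (p[t0+2]'(by omega)) :=
    adj_consec hch (t0+1) (by omega)
  have hbne : p[t0+1]'(by omega) ≠ c₀ := fun h => hbC (h ▸ hc₀C)
  obtain ⟨e, hbe, hec⟩ : ∃ e, G.Anc (p[t0+1]'(by omega)) e ∧ G.Dir e c₀ := by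
    rcases Relation.ReflTransGen.cases_tail hanc with h | ⟨e, h1, h2⟩
    · exact absurd h (fun hh => hbne hh.symm)
    · exact ⟨e, h1, h2⟩
  have hheadc₀ : G.HeadAt e c₀ := Or.inl hec
  have hBdbc : G.Bd (p[t0+1]'(by omega)) ⊆ G.Bd c₀ := bd_subset_of_anc hB hanc
  have hane : (p[t0]'(by omega)) ≠ c₀ := by
    intro h
    apply headAt_notAnc hA hcol.1
    rw [h]
    exact hanc
  have hcne : (p[t0+2]'(by omega)) ≠ c₀ := by
    intro h
    apply headAt_notAnc hA hcol.2
    rw [h]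
    exact hanc
  have hac₀ : G.HeadAt (p[t0]'(by omega)) c₀ := by
    apply headAt_of_bd hA (hBdbc (mem_bd_of_adj (adj_symm' hab))) hane hheadc₀
    intro h
    exact headAt_notAnc hA hcol.1 (hanc.trans h)
  have hcc₀ : G.HeadAt (p[t0+2]'(by omega)) c₀ := by
    apply headAt_of_bd hA (hBdbc (mem_bd_of_adj hbc)) hcne hheadc₀
    intro h
    exact headAt_notAnc hA hcol.2 (hanc.trans h)
  have hL2c : G.HeadAt (p[t0+1]'(by omega)) (p[t0]'(by omega)) ∨
      G.E (p[t0]'(by omega)) c₀ = .arrowTo := by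
    rcases hac₀ with h | h
    · exact Or.inr h
    · rcases hcol.1 with h' | h'
      · have hd : G.Dir (p[t0]'(by omega)) (p[t0+1]'(by omega)) := h'
        exact absurd (Relation.ReflTransGen.head hd hanc) (hA.2.2 _ _ h)
      · exact Or.inl (Or.inr (eMirror G h'))
  have hR2c : G.HeadAt (p[t0+2-1]'(by omega)) (p[t0+2]'(by omega)) ∨
      G.E (p[t0+2]'(by omega)) c₀ = .arrowTo := by
    rcases hcc₀ with h | h
    · exact Or.inr h
    · rcases hcol.2 with h' | h'
      · have hd : G.Dir (p[t0+2]'(by omega)) (p[t0+1]'(by omega)) := h'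
        exact absurd (Relation.ReflTransGen.head hd hanc) (hA.2.2 _ _ h)
      · have e : p[t0+2-1]'(by omega) = p[t0+1]'(by omega) := getElem_congr_idx' (by omega) _
        rw [e]
        exact Or.inl (Or.inr (eMirror G h'))
  by_cases hc₀p : ∃ mm, ∃ hmm : mm < p.length, p[mm] = c₀
  · obtain ⟨mm, hmml, hmmc⟩ := hc₀p
    have hmmt0 : mm ≠ t0 := by rintro rfl; exact hane hmmc
    have hmmt1 : mm ≠ t0+1 := by rintro rfl; exact hbne hmmc
    have hmmt2 : mm ≠ t0+2 := by rintro rfl; exact hcne hmmc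
    rcases (show mm < t0 ∨ t0 + 2 < mm by omega) with hmlt | hmgt
    · -- c₀ appears on p before the triple : only right extension needed
      obtain ⟨jr', h', hge, hEz, hcond⟩ := right_extend hA hB hch htr c₀ (t0+2)
        (fun k hk hki hkc =>
          absurd ((hnd.getElem_inj_iff).1 (hkc.trans hmmc.symm)) (by omega))
        p.length (t0+2) (by omega) le_rfl (by omega) (by omega) hcc₀ hR2c
      apply key mm jr' c₀ (by omega) (by omega)
      · intro h
        exact (getElem_congr_idx' (by omega) _).trans hmmc
      · intro h; exact absurd h (by omega)
      · intro k hk hcases hkc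
        exact absurd ((hnd.getElem_inj_iff).1 (hkc.trans hmmc.symm)) (by omega)
      · intro h1
        have e : p[mm-1+1]'(by omega) = p[mm]'(by omega) := getElem_congr_idx' (by omega) _
        have hadj := adj_consec hch (mm-1) (by omega)
        rw [e, hmmc] at hadj
        exact hadj
      · intro hlt
        apply adj_symm'
        intro hnone
        rcases hEz with hEz | hEz <;> rw [hnone] at hEz <;> exact absurd hEz (by decide)
      · intro h2
        have base := htr (mm-2) (by omega)
        have e3 : p[mm-2+1]'(by omega) = p[mm-1]'(by omega) := getElem_congr_idx' (by omega) _
        have e4 : p[mm-2+2]'(by omega) = p[mm]'(by omega) := getElem_congr_idx' (by omega) _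
        rw [e3, e4, hmmc] at base
        exact base
      · intro h1 h2
        by_cases hhd : G.HeadAt (p[mm-1]'(by omega)) c₀
        · exact mcond_of_collider hhd hEz ⟨c₀, hc₀C, Relation.ReflTransGen.refl⟩
        · exfalso
          have base := htr (mm-1) (by omega)
          have e3 : p[mm-1+1]'(by omega) = p[mm]'(by omega) := getElem_congr_idx' (by omega) _
          rw [e3, hmmc] at base
          exact (base.2 (fun hcol' => hhd hcol'.1)) hc₀C
      · exact fun h1 => hcond h1
      · intro hj; exact absurd hj (by omega)
    · -- c₀ appears on p after the triple : only left extension needed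
      obtain ⟨i', h', hle, hEz, hcond⟩ := left_extend hA hB hch htr c₀ t0
        (fun k hk hki hkc =>
          absurd ((hnd.getElem_inj_iff).1 (hkc.trans hmmc.symm)) (by omega))
        t0 le_rfl (by omega) hac₀ hL2c
      apply key (i'+1) (mm+1) c₀ (by omega) (by omega)
      · intro h; exact absurd h (by omega)
      · intro h
        exact (getElem_congr_idx' (by omega) _).trans hmmc
      · intro k hk hcases hkc
        exact absurd ((hnd.getElem_inj_iff).1 (hkc.trans hmmc.symm)) (by omega)
      · intro h1
        have e : p[i'+1-1]'(by omega) = p[i']'(by omega) := getElem_congr_idx' (by omega) _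
        rw [e]
        intro hnone
        rcases hEz with hEz | hEz <;> rw [hnone] at hEz <;> exact absurd hEz (by decide)
      · intro hlt
        have hadj := adj_consec hch mm (by omega)
        rw [hmmc] at hadj
        exact hadj
      · intro h2
        have e1 : p[i'+1-2]'(by omega) = p[i'-1]'(by omega) := getElem_congr_idx' (by omega) _
        have e2 : p[i'+1-1]'(by omega) = p[i']'(by omega) := getElem_congr_idx' (by omega) _
        rw [e1, e2]
        exact hcond (by omega)
      · intro h1 h2
        have e2 : p[i'+1-1]'(by omega) = p[i']'(by omega) := getElem_congr_idx' (by omega) _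
        rw [e2]
        by_cases hhd : G.HeadAt (p[mm+1]'(by omega)) c₀
        · exact mcond_of_collider hEz hhd ⟨c₀, hc₀C, Relation.ReflTransGen.refl⟩
        · exfalso
          have base := htr (mm-1) (by omega)
          have e3 : p[mm-1+1]'(by omega) = p[mm]'(by omega) := getElem_congr_idx' (by omega) _
          have e4 : p[mm-1+2]'(by omega) = p[mm+1]'(by omega) := getElem_congr_idx' (by omega) _
          rw [e3, e4, hmmc] at base
          exact (base.2 (fun hcol' => hhd hcol'.2)) hc₀C
      · intro h1
        have base := htr mm (by omega)
        have e4 : p[mm+2]'(by omega) = p[mm+1+1]'(by omega) := getElem_congr_idx' (by omega) _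
        rw [hmmc, e4] at base
        exact base
      · intro hj; exact absurd hj (by omega)
  · -- c₀ does not lie on p : insert it in place of b
    push_neg at hc₀p
    obtain ⟨i', h', hle, hEz, hcondL⟩ := left_extend hA hB hch htr c₀ t0
      (fun k hk hki => hc₀p k hk) t0 le_rfl (by omega) hac₀ hL2c
    obtain ⟨jr', h2', hge, hEz', hcondR⟩ := right_extend hA hB hch htr c₀ (t0+2)
      (fun k hk hki => hc₀p k hk) p.length (t0+2) (by omega) le_rfl (by omega)
      (by omega) hcc₀ hR2c
    apply key (i'+1) jr' c₀ (by omega) (by omega)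
    · intro h; exact absurd h (by omega)
    · intro h; exact absurd h (by omega)
    · intro k hk hcases; exact hc₀p k hk
    · intro h1
      have e : p[i'+1-1]'(by omega) = p[i']'(by omega) := getElem_congr_idx' (by omega) _
      rw [e]
      intro hnone
      rcases hEz with hEz | hEz <;> rw [hnone] at hEz <;> exact absurd hEz (by decide)
    · intro hlt
      apply adj_symm'
      intro hnone
      rcases hEz' with hEz' | hEz' <;> rw [hnone] at hEz' <;> exact absurd hEz' (by decide)
    · intro hh2
      have e1 : p[i'+1-2]'(by omega) = p[i'-1]'(by omega) := getElem_congr_idx' (by omega) _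
      have e2 : p[i'+1-1]'(by omega) = p[i']'(by omega) := getElem_congr_idx' (by omega) _
      rw [e1, e2]
      exact hcondL (by omega)
    · intro h1 hh2
      have e2 : p[i'+1-1]'(by omega) = p[i']'(by omega) := getElem_congr_idx' (by omega) _
      rw [e2]
      exact mcond_of_collider hEz hEz' ⟨c₀, hc₀C, Relation.ReflTransGen.refl⟩
    · exact fun h1 => hcondR h1
    · intro hj
      refine ⟨by omega, by omega, hc₀C, ?_⟩
      have e : p[i'+1]'(by omega) = p[t0+1]'(by omega) := getElem_congr_idx' (by omega) _
      rw [e]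
      exact hbC
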